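/- arXiv:1403.4682 — 3 statements merged into one kernel-verified Lean document; each statement's English description precedes it below -/
import Mathlib

section
/- Let M ∈ ℝ^{L×K} be arbitrary, and let A ∈ ℝ^{K×N} have strictly positive entries. Then for any C ∈ ℝ^{K×N}, ∑_{k,n} ((MᵀM A)_{kn} / A_{kn}) · C_{kn}² ≥ Tr(Cᵀ MᵀM C), provided MᵀM has nonnegative entries (e.g., M has nonnegative entries). -/
open Matrix BigOperators Finset

lemma pair_aux (b ak aj ck cj : ℝ) (hb : 0 ≤ b) (hak : 0 < ak) (haj : 0 < aj) :
    b * (ck * cj) + b * (cj * ck)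
      ≤ b * (aj / ak * ck ^ 2) + b * (ak / aj * cj ^ 2) := by
  have h1 : 0 ≤ ck * cj + cj * ck ∨ True := Or.inr trivial
  have key : ck * cj + cj * ck ≤ aj / ak * ck ^ 2 + ak / aj * cj ^ 2 := by
    rw [div_mul_eq_mul_div, div_mul_eq_mul_div, div_add_div _ _ hak.ne' haj.ne',
      le_div_iff₀ (by positivity)]
    nlinarith [sq_nonneg (aj * ck - ak * cj), mul_pos hak haj]
  nlinarith [mul_le_mul_of_nonneg_left key hb]

theorem auxiliary_first_term_bound
    (L K N : ℕ) (M : Matrix (Fin L) (Fin K) ℝ)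
    (hM : ∀ l k, 0 ≤ M l k)
    (A : Matrix (Fin K) (Fin N) ℝ) (hA : ∀ k n, 0 < A k n)
    (C : Matrix (Fin K) (Fin N) ℝ) :
    Matrix.trace (Cᵀ * (Mᵀ * M) * C)
      ≤ ∑ k, ∑ n, ((Mᵀ * M * A) k n / A k n) * (C k n) ^ 2 := by
  set B := Mᵀ * M with hB
  have hBnn : ∀ k j, 0 ≤ B k j := by
    intro k j
    simp only [hB, Matrix.mul_apply, Matrix.transpose_apply]
    exact Finset.sum_nonneg fun l _ => mul_nonneg (hM l k) (hM l j)
  have hBsym : ∀ k j, B k j = B j k := by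
    intro k j
    simp only [hB, Matrix.mul_apply, Matrix.transpose_apply, mul_comm]
  -- rewrite both sides as triple sums
  have hLHS : Matrix.trace (Cᵀ * B * C)
      = ∑ n, ∑ k, ∑ j, B k j * (C k n * C j n) := by
    simp only [Matrix.trace, Matrix.diag, Matrix.mul_apply, Matrix.transpose_apply,
      Finset.sum_mul]
    refine Finset.sum_congr rfl fun n _ => ?_
    rw [Finset.sum_comm]
    refine Finset.sum_congr rfl fun k _ => ?_
    refine Finset.sum_congr rfl fun j _ => ?_
    ring
  have hRHS : (∑ k, ∑ n, ((B * A) k n / A k n) * (C k n) ^ 2)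
      = ∑ n, ∑ k, ∑ j, B k j * (A j n / A k n * C k n ^ 2) := by
    rw [Finset.sum_comm]
    refine Finset.sum_congr rfl fun n _ => ?_
    refine Finset.sum_congr rfl fun k _ => ?_
    simp only [Matrix.mul_apply, Finset.sum_div, Finset.sum_mul]
    refine Finset.sum_congr rfl fun j _ => ?_
    ring
  rw [hLHS, hRHS]
  apply Finset.sum_le_sum
  intro n _
  have h2 : (2:ℝ) * (∑ k, ∑ j, B k j * (C k n * C j n))
      ≤ 2 * (∑ k, ∑ j, B k j * (A j n / A k n * C k n ^ 2)) := by
    have e1 : ∀ (f : Fin K → Fin K → ℝ),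
        2 * (∑ k, ∑ j, f k j) = ∑ k, ∑ j, (f k j + f j k) := by
      intro f
      rw [two_mul]
      nth_rewrite 2 [Finset.sum_comm]
      rw [← Finset.sum_add_distrib]
      refine Finset.sum_congr rfl fun k _ => ?_
      rw [← Finset.sum_add_distrib]
    rw [e1, e1]
    apply Finset.sum_le_sum
    intro k _
    apply Finset.sum_le_sum
    intro j _
    rw [hBsym j k]
    exact pair_aux (B k j) (A k n) (A j n) (C k n) (C j n)
      (hBnn k j) (hA k n) (hA j n)
  linarith
end

section
/- Let S ∈ ℝ^{K×K} be a symmetric matrix with nonnegative entries and let A ∈ ℝ^{K×N} have strictly positive entries. Then for any C ∈ ℝ^{K×N}: ∑_{k,n} (S A)_{kn}/A_{kn} · C_{kn}² − ∑_{k,l,n} C_{kn} C_{ln} S_{lk} = (1/2) ∑_{k,l,n} S_{kl} (A_{ln} C_{kn} − A_{kn} C_{ln})² / (A_{kn} A_{ln}) ≥ 0. -/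
open Matrix BigOperators Finset

theorem auxiliary_symmetric_term_identity
    (K N : ℕ) (S : Matrix (Fin K) (Fin K) ℝ)
    (hsym : S.IsSymm) (hnn : ∀ k l, 0 ≤ S k l)
    (A : Matrix (Fin K) (Fin N) ℝ) (hA : ∀ k n, 0 < A k n)
    (C : Matrix (Fin K) (Fin N) ℝ) :
    (∑ k, ∑ n, ((S * A) k n / A k n) * (C k n) ^ 2
        - ∑ k, ∑ l, ∑ n, C k n * C l n * S l k
      = (1 / 2 : ℝ) * ∑ k, ∑ l, ∑ n,
          S k l * (A l n * C k n - A k n * C l n) ^ 2 / (A k n * A l n))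
    ∧ 0 ≤ ∑ k, ∑ n, ((S * A) k n / A k n) * (C k n) ^ 2
        - ∑ k, ∑ l, ∑ n, C k n * C l n * S l k := by
  have hA0 : ∀ k n, A k n ≠ 0 := fun k n => (hA k n).ne'
  have hS : ∀ k l, S l k = S k l := fun k l => hsym.apply k l
  have key : ∀ k l n, S k l * (A l n * C k n - A k n * C l n) ^ 2 / (A k n * A l n)
      = S k l * A l n / A k n * C k n ^ 2 + S k l * A k n / A l n * C l n ^ 2
        - 2 * (S k l * (C k n * C l n)) := by
    intro k l n
    field_simp [hA0 k n, hA0 l n]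
    ring
  -- T1 : first term rewritten as triple sum
  have h1 : ∑ k, ∑ n, ((S * A) k n / A k n) * (C k n) ^ 2
      = ∑ k, ∑ l, ∑ n, S k l * A l n / A k n * C k n ^ 2 := by
    refine Finset.sum_congr rfl fun k _ => ?_
    calc ∑ n, ((S * A) k n / A k n) * (C k n) ^ 2
        = ∑ n, ∑ l, S k l * A l n / A k n * C k n ^ 2 := by
          refine Finset.sum_congr rfl fun n _ => ?_
          rw [Matrix.mul_apply, Finset.sum_div, Finset.sum_mul]
      _ = ∑ l, ∑ n, S k l * A l n / A k n * C k n ^ 2 := Finset.sum_comm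
  have h2 : ∑ k, ∑ l, ∑ n, C k n * C l n * S l k
      = ∑ k, ∑ l, ∑ n, S k l * (C k n * C l n) := by
    refine Finset.sum_congr rfl fun k _ => Finset.sum_congr rfl fun l _ =>
      Finset.sum_congr rfl fun n _ => ?_
    rw [hS]; ring
  have h3 : ∑ k, ∑ l, ∑ n, S k l * A k n / A l n * C l n ^ 2
      = ∑ k, ∑ l, ∑ n, S k l * A l n / A k n * C k n ^ 2 := by
    rw [Finset.sum_comm]
    refine Finset.sum_congr rfl fun k _ => Finset.sum_congr rfl fun l _ =>
      Finset.sum_congr rfl fun n _ => ?_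
    rw [hS]
  have hid : ∑ k, ∑ n, ((S * A) k n / A k n) * (C k n) ^ 2
        - ∑ k, ∑ l, ∑ n, C k n * C l n * S l k
      = (1 / 2 : ℝ) * ∑ k, ∑ l, ∑ n,
          S k l * (A l n * C k n - A k n * C l n) ^ 2 / (A k n * A l n) := by
    have hbig : ∑ k, ∑ l, ∑ n, S k l * (A l n * C k n - A k n * C l n) ^ 2 / (A k n * A l n)
        = (∑ k, ∑ l, ∑ n, S k l * A l n / A k n * C k n ^ 2)
          + (∑ k, ∑ l, ∑ n, S k l * A k n / A l n * C l n ^ 2)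
          - 2 * ∑ k, ∑ l, ∑ n, S k l * (C k n * C l n) := by
      simp only [key, Finset.sum_sub_distrib, Finset.sum_add_distrib, ← Finset.mul_sum]
    rw [h1, h2, hbig, h3]
    ring
  refine ⟨hid, ?_⟩
  rw [hid]
  have : 0 ≤ ∑ k, ∑ l, ∑ n, S k l * (A l n * C k n - A k n * C l n) ^ 2 / (A k n * A l n) := by
    refine Finset.sum_nonneg fun k _ => Finset.sum_nonneg fun l _ =>
      Finset.sum_nonneg fun n _ => ?_
    exact div_nonneg (mul_nonneg (hnn k l) (sq_nonneg _))
      (le_of_lt (mul_pos (hA k n) (hA l n)))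
  linarith
end

section
/- Fix A' ∈ ℝ^{K×N} with strictly positive entries and let G(A, A') = F(A') + Tr(Cᵀ∇F(A')) + (1/2)∑_{k,n} Q_{kn} C_{kn}² where C = A − A' and Q_{kn} = ((MᵀM A' + λ A' D + α·J)_{kn}) / A'_{kn}, with all Q_{kn} > 0. Then the unique minimizer of G(·, A') over ℝ^{K×N} is given entrywise by A_{kn} = A'_{kn} · (MᵀY + λ A' W)_{kn} / (MᵀM A' + λ A' D + α)_{kn}, i.e., the multiplicative update rule. -/
open Matrix BigOperators Finset

theorem multiplicative_update_minimizes_auxiliary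
    (Ldim K N : ℕ)
    (Y : Matrix (Fin Ldim) (Fin N) ℝ) (hY : ∀ l n, 0 ≤ Y l n)
    (M : Matrix (Fin Ldim) (Fin K) ℝ) (hM : ∀ l k, 0 ≤ M l k)
    (W : Matrix (Fin N) (Fin N) ℝ) (hWsym : W.IsSymm) (hWnn : ∀ i j, 0 ≤ W i j)
    (D : Matrix (Fin N) (Fin N) ℝ) (hD : D = Matrix.diagonal (fun n => ∑ m, W m n))
    (L : Matrix (Fin N) (Fin N) ℝ) (hL : L = D - W)
    (lam alpha : ℝ) (hlam : 0 < lam) (halpha : 0 < alpha)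
    (A' : Matrix (Fin K) (Fin N) ℝ) (hA' : ∀ k n, 0 < A' k n)
    (J : Matrix (Fin K) (Fin N) ℝ) (hJ : J = Matrix.of fun _ _ => (1 : ℝ))
    (FA' : ℝ)
    (gradFA' : Matrix (Fin K) (Fin N) ℝ)
    (hgrad : gradFA' = Mᵀ * M * A' - Mᵀ * Y + lam • (A' * L) + alpha • J)
    (Q : Matrix (Fin K) (Fin N) ℝ)
    (hQ : ∀ k n, Q k n = (Mᵀ * M * A' + lam • (A' * D) + alpha • J) k n / A' k n)
    (hQpos : ∀ k n, 0 < Q k n)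
    (hden : ∀ k n, 0 < (Mᵀ * M * A' + lam • (A' * D) + alpha • J) k n)
    (G : Matrix (Fin K) (Fin N) ℝ → ℝ)
    (hG : ∀ B, G B = FA' + Matrix.trace ((B - A')ᵀ * gradFA')
        + (1 / 2 : ℝ) * ∑ k, ∑ n, Q k n * ((B - A') k n) ^ 2)
    (Anew : Matrix (Fin K) (Fin N) ℝ)
    (hAnew : ∀ k n, Anew k n = A' k n * (Mᵀ * Y + lam • (A' * W)) k n
        / (Mᵀ * M * A' + lam • (A' * D) + alpha • J) k n) :
    ∀ B : Matrix (Fin K) (Fin N) ℝ, G Anew ≤ G B ∧ (G B = G Anew → B = Anew) := by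
  -- gradient in terms of Q and Anew
  have hg : ∀ k n, gradFA' k n = Q k n * (A' k n - Anew k n) := by
    intro k n
    have hd := hden k n
    have hdne := ne_of_gt hd
    have ha := hA' k n
    have hane := ne_of_gt ha
    have hgrad' : gradFA' k n
        = (Mᵀ * M * A' + lam • (A' * D) + alpha • J) k n
          - (Mᵀ * Y + lam • (A' * W)) k n := by
      subst hgrad hL
      simp only [Matrix.sub_apply, Matrix.add_apply, Matrix.smul_apply,
        Matrix.mul_sub, smul_eq_mul]
      ring
    rw [hgrad', hQ k n, hAnew k n]
    set d := (Mᵀ * M * A' + lam • (A' * D) + alpha • J) k n with hdDef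
    set s := (Mᵀ * Y + lam • (A' * W)) k n with hsDef
    field_simp
  -- trace formula
  have htr : ∀ X : Matrix (Fin K) (Fin N) ℝ,
      Matrix.trace (Xᵀ * gradFA') = ∑ k, ∑ n, X k n * gradFA' k n := by
    intro X
    rw [Matrix.trace]
    simp only [Matrix.diag, Matrix.mul_apply, Matrix.transpose_apply]
    exact Finset.sum_comm
  -- key decomposition
  have key : ∀ B, G B = G Anew + (1/2) * ∑ k, ∑ n, Q k n * (B k n - Anew k n)^2 := by
    intro B
    rw [hG B, hG Anew, htr, htr]
    have hpt : ∀ k n,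
        (B - A') k n * gradFA' k n + (1/2) * (Q k n * ((B - A') k n)^2)
          = ((Anew - A') k n * gradFA' k n + (1/2) * (Q k n * ((Anew - A') k n)^2))
            + (1/2) * (Q k n * (B k n - Anew k n)^2) := by
      intro k n
      simp only [Matrix.sub_apply]
      rw [hg k n]; ring
    have hexp : ∑ k, ∑ n,
        ((B - A') k n * gradFA' k n + (1/2) * (Q k n * ((B - A') k n)^2))
        = ∑ k, ∑ n,
        (((Anew - A') k n * gradFA' k n + (1/2) * (Q k n * ((Anew - A') k n)^2))
            + (1/2) * (Q k n * (B k n - Anew k n)^2)) := by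
      exact Finset.sum_congr rfl fun k _ => Finset.sum_congr rfl fun n _ => hpt k n
    have hL1 : ∑ k, ∑ n,
        ((B - A') k n * gradFA' k n + (1/2) * (Q k n * ((B - A') k n)^2))
        = (∑ k, ∑ n, (B - A') k n * gradFA' k n)
          + (1/2) * ∑ k, ∑ n, Q k n * ((B - A') k n)^2 := by
      simp [Finset.sum_add_distrib, Finset.mul_sum]
    have hL2 : ∑ k, ∑ n,
        (((Anew - A') k n * gradFA' k n + (1/2) * (Q k n * ((Anew - A') k n)^2))
            + (1/2) * (Q k n * (B k n - Anew k n)^2))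
        = ((∑ k, ∑ n, (Anew - A') k n * gradFA' k n)
          + (1/2) * ∑ k, ∑ n, Q k n * ((Anew - A') k n)^2)
          + (1/2) * ∑ k, ∑ n, Q k n * (B k n - Anew k n)^2 := by
      simp [Finset.sum_add_distrib, Finset.mul_sum]
    linarith [hexp, hL1, hL2]
  intro B
  have hnn : 0 ≤ ∑ k, ∑ n, Q k n * (B k n - Anew k n)^2 := by
    apply Finset.sum_nonneg; intro k _
    apply Finset.sum_nonneg; intro n _
    exact mul_nonneg (hQpos k n).le (sq_nonneg _)
  constructor
  · rw [key B]; linarith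
  · intro heq
    rw [key B] at heq
    have hzero : ∑ k, ∑ n, Q k n * (B k n - Anew k n)^2 = 0 := by linarith
    have hterm : ∀ k ∈ Finset.univ, ∑ n, Q k n * (B k n - Anew k n)^2 = 0 := by
      rw [← Finset.sum_eq_zero_iff_of_nonneg]
      · exact hzero
      · intro k _
        apply Finset.sum_nonneg; intro n _
        exact mul_nonneg (hQpos k n).le (sq_nonneg _)
    ext k n
    have hterm2 : ∀ n ∈ Finset.univ, Q k n * (B k n - Anew k n)^2 = 0 := by
      rw [← Finset.sum_eq_zero_iff_of_nonneg]
      · exact hterm k (Finset.mem_univ k)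
      · intro n _
        exact mul_nonneg (hQpos k n).le (sq_nonneg _)
    have := hterm2 n (Finset.mem_univ n)
    have hq := hQpos k n
    have : (B k n - Anew k n)^2 = 0 := by
      rcases mul_eq_zero.mp this with h | h
      · exact absurd h (ne_of_gt hq)
      · exact h
    have := pow_eq_zero_iff (n := 2) (by norm_num) |>.mp this
    linarith
end
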